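/- Let f be M_f-self-concordant-like and g proper closed convex. Given x in dom F, a positive definite matrix D, let s := argmin_x { f(xᵏ) + ⟨∇f(xᵏ), x − xᵏ⟩ + (1/2)⟨D(x−xᵏ), x−xᵏ⟩ + g(x) }, d := s − xᵏ, λ := ‖d‖_{xᵏ} (the local Hessian norm), r := M_f‖d‖₂, β := ⟨Dd, d⟩^{1/2}. If β²r ≤ (e^{r}−1)λ², then with step size α := (1/r)·ln(1 + β²r/λ²) ∈ (0, 1], the point x⁺ := xᵏ + α·d satisfies F(x⁺) ≤ F(xᵏ) − (β²/r)·[(1 + λ²/(rβ²))·ln(1 + β²r/λ²) − 1]. -/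

import Mathlib

open scoped RealInnerProductSpace

/-- A convex `C³` function `f` is `M`-self-concordant-like if along every line
`t ↦ f (x + t • u)` the third derivative is bounded by `M * φ''(t) * ‖u‖`. -/
def SCLike {E : Type*} [NormedAddCommGroup E] [InnerProductSpace ℝ E]
    (M : ℝ) (f : E → ℝ) : Prop :=
  ContDiff ℝ 3 f ∧ ConvexOn ℝ Set.univ f ∧
    ∀ x u : E, ∀ t : ℝ,
      |deriv^[3] (fun s : ℝ => f (x + s • u)) t| ≤
        M * deriv^[2] (fun s : ℝ => f (x + s • u)) t * ‖u‖

/-- The Hessian quadratic form `⟨∇²f(x) u, u⟩` of `f` at `x`. -/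
noncomputable def hessQ {E : Type*} [NormedAddCommGroup E] [InnerProductSpace ℝ E]
    (f : E → ℝ) (x u : E) : ℝ :=
  iteratedFDeriv ℝ 2 f x ![u, u]

/-- The local norm `‖u‖_x := ⟨∇²f(x) u, u⟩^{1/2}`. -/
noncomputable def locNorm {E : Type*} [NormedAddCommGroup E] [InnerProductSpace ℝ E]
    (f : E → ℝ) (x u : E) : ℝ :=
  Real.sqrt (hessQ f x u)


section line
variable {E : Type*} [NormedAddCommGroup E] [InnerProductSpace ℝ E]
  (f : E → ℝ) (x u : E)

lemma line_hasDerivAt (t : ℝ) : HasDerivAt (fun s : ℝ => x + s • u) u t := by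
  simpa using ((hasDerivAt_id t).smul_const u).const_add x

lemma phi_hasDerivAt (hf : ContDiff ℝ 3 f) (t : ℝ) :
    HasDerivAt (fun s : ℝ => f (x + s • u)) (fderiv ℝ f (x + t • u) u) t :=
  ((hf.differentiable (by norm_num)).differentiableAt.hasFDerivAt).comp_hasDerivAt t
    (line_hasDerivAt x u t)

lemma p_hasDerivAt (hf : ContDiff ℝ 3 f) (t : ℝ) :
    HasDerivAt (fun s : ℝ => fderiv ℝ f (x + s • u) u)
      (fderiv ℝ (fderiv ℝ f) (x + t • u) u u) t := by
  have h2 : ContDiff ℝ 2 (fderiv ℝ f) := hf.fderiv_right (by norm_num)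
  have := ((h2.differentiable (by norm_num)).differentiableAt.hasFDerivAt).comp_hasDerivAt t
    (line_hasDerivAt x u t)
  simpa using this.clm_apply (hasDerivAt_const t u)

lemma h_hasDerivAt (hf : ContDiff ℝ 3 f) (t : ℝ) :
    HasDerivAt (fun s : ℝ => fderiv ℝ (fderiv ℝ f) (x + s • u) u u)
      (fderiv ℝ (fderiv ℝ (fderiv ℝ f)) (x + t • u) u u u) t := by
  have h2 : ContDiff ℝ 2 (fderiv ℝ f) := hf.fderiv_right (by norm_num)
  have h1 : ContDiff ℝ 1 (fderiv ℝ (fderiv ℝ f)) := h2.fderiv_right (by norm_num)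
  have := ((h1.differentiable (by norm_num)).differentiableAt.hasFDerivAt).comp_hasDerivAt t
    (line_hasDerivAt x u t)
  have := this.clm_apply (hasDerivAt_const t u)
  simpa using this.clm_apply (hasDerivAt_const t u)

lemma phi_convex (hconv : ConvexOn ℝ Set.univ f) :
    ConvexOn ℝ Set.univ (fun s : ℝ => f (x + s • u)) := by
  have := hconv.comp_affineMap (AffineMap.lineMap (x : E) (x + u))
  have e : (fun s : ℝ => f (x + s • u)) = f ∘ AffineMap.lineMap x (x + u) := by
    funext s
    simp [AffineMap.lineMap_apply, add_comm]
  rw [e]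
  simpa using this

lemma h_nonneg (hf : ContDiff ℝ 3 f) (hconv : ConvexOn ℝ Set.univ f) (t : ℝ) :
    0 ≤ fderiv ℝ (fderiv ℝ f) (x + t • u) u u := by
  have hpmono : Monotone (fun s : ℝ => fderiv ℝ f (x + s • u) u) := by
    have hd : deriv (fun s : ℝ => f (x + s • u)) = fun s => fderiv ℝ f (x + s • u) u :=
      funext fun t => (phi_hasDerivAt f x u hf t).deriv
    have := ConvexOn.monotoneOn_deriv (phi_convex f x u hconv)
      (fun s _ => ((phi_hasDerivAt f x u hf s).differentiableAt))
    rw [hd] at this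
    exact fun a b hab => this (Set.mem_univ a) (Set.mem_univ b) hab
  have hp := p_hasDerivAt f x u hf t
  have hl := hasDerivAt_iff_tendsto_slope.mp hp
  have hl' := hl.mono_left (nhdsWithin_mono t (by intro s hs; exact ne_of_gt hs : Set.Ioi t ⊆ {t}ᶜ))
  refine ge_of_tendsto hl' ?_
  filter_upwards [self_mem_nhdsWithin] with s hs
  have : (0:ℝ) < s - t := sub_pos.mpr hs
  rw [slope_def_field]
  exact div_nonneg (sub_nonneg.mpr (hpmono (le_of_lt hs))) this.le

lemma deriv2_line (hf : ContDiff ℝ 3 f) :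
    deriv^[2] (fun s : ℝ => f (x + s • u)) =
      fun t => fderiv ℝ (fderiv ℝ f) (x + t • u) u u := by
  have d1 : deriv (fun s : ℝ => f (x + s • u)) = fun s => fderiv ℝ f (x + s • u) u :=
    funext fun t => (phi_hasDerivAt f x u hf t).deriv
  have d2 : deriv (fun s : ℝ => fderiv ℝ f (x + s • u) u) =
      fun s => fderiv ℝ (fderiv ℝ f) (x + s • u) u u :=
    funext fun t => (p_hasDerivAt f x u hf t).deriv
  show deriv^[1+1] _ = _
  rw [Function.iterate_succ_apply', Function.iterate_one, d1, d2]

lemma deriv3_line (hf : ContDiff ℝ 3 f) :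
    deriv^[3] (fun s : ℝ => f (x + s • u)) =
      fun t => fderiv ℝ (fderiv ℝ (fderiv ℝ f)) (x + t • u) u u u := by
  have d3 : deriv (fun s : ℝ => fderiv ℝ (fderiv ℝ f) (x + s • u) u u) =
      fun s => fderiv ℝ (fderiv ℝ (fderiv ℝ f)) (x + s • u) u u u :=
    funext fun t => (h_hasDerivAt f x u hf t).deriv
  show deriv^[2+1] _ = _
  rw [Function.iterate_succ_apply', deriv2_line f x u hf, d3]

end line

open Real in
lemma taylor_bound {E : Type*} [NormedAddCommGroup E] [InnerProductSpace ℝ E]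
    (M : ℝ) (f : E → ℝ) (hf : ContDiff ℝ 3 f) (hconv : ConvexOn ℝ Set.univ f)
    (hsc3 : ∀ x u : E, ∀ t : ℝ,
      |deriv^[3] (fun s : ℝ => f (x + s • u)) t| ≤
        M * deriv^[2] (fun s : ℝ => f (x + s • u)) t * ‖u‖)
    (x u : E) (r : ℝ) (hrdef : r = M * ‖u‖) (hrpos : 0 < r) (a : ℝ) (ha : 0 ≤ a) :
    f (x + a • u) ≤ f x + a * fderiv ℝ f x u +
      fderiv ℝ (fderiv ℝ f) x u u * (Real.exp (r * a) - r * a - 1) / r ^ 2 := by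
  have hr0 : r ≠ 0 := ne_of_gt hrpos
  set h : ℝ → ℝ := fun t => fderiv ℝ (fderiv ℝ f) (x + t • u) u u with hh
  set p0 : ℝ := fderiv ℝ f x u with hp0
  have hx0 : x + (0:ℝ) • u = x := by simp
  have h0eq : h 0 = fderiv ℝ (fderiv ℝ f) x u u := by rw [hh]; simp
  have hnn : ∀ t, 0 ≤ h t := fun t => h_nonneg f x u hf hconv t
  have hq : ∀ t, |fderiv ℝ (fderiv ℝ (fderiv ℝ f)) (x + t • u) u u u| ≤ r * h t := by
    intro t
    have := hsc3 x u t
    rw [deriv3_line f x u hf, deriv2_line f x u hf] at this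
    calc |fderiv ℝ (fderiv ℝ (fderiv ℝ f)) (x + t • u) u u u|
        ≤ M * h t * ‖u‖ := this
      _ = r * h t := by rw [hrdef]; ring
  -- Gronwall
  have hG : ∀ t ∈ Set.Icc (0:ℝ) a, h t ≤ h 0 * Real.exp (r * t) := by
    have := norm_le_gronwallBound_of_norm_deriv_right_le (f := h)
      (f' := fun t => fderiv ℝ (fderiv ℝ (fderiv ℝ f)) (x + t • u) u u u)
      (δ := h 0) (K := r) (ε := 0) (a := 0) (b := a)
      (fun t _ => (h_hasDerivAt f x u hf t).differentiableAt.continuousAt.continuousWithinAt)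
      (fun t _ => (h_hasDerivAt f x u hf t).hasDerivWithinAt)
      (by rw [Real.norm_of_nonneg (hnn 0)])
      (fun t _ => by
        rw [Real.norm_eq_abs, Real.norm_of_nonneg (hnn t), add_zero]; exact hq t)
    intro t ht
    have := this t ht
    rw [gronwallBound_ε0, sub_zero] at this
    exact (le_abs_self _).trans this
  -- first comparison
  set w2 : ℝ → ℝ := fun t => h 0 * (Real.exp (r * t) - 1) / r -
    (fderiv ℝ f (x + t • u) u - p0) with hw2
  have hw2' : ∀ t, HasDerivAt w2 (h 0 * Real.exp (r * t) - h t) t := by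
    intro t
    have e1 : HasDerivAt (fun t : ℝ => Real.exp (r * t)) (Real.exp (r * t) * r) t := by
      simpa using ((hasDerivAt_id t).const_mul r).exp
    have := (((e1.sub_const 1).const_mul (h 0)).div_const r).sub
      ((p_hasDerivAt f x u hf t).sub_const p0)
    refine this.congr_deriv ?_
    simp only [hh]
    field_simp
  have hw2mono : MonotoneOn w2 (Set.Icc 0 a) := by
    apply monotoneOn_of_deriv_nonneg (convex_Icc 0 a)
    · exact fun t _ => (hw2' t).differentiableAt.continuousAt.continuousWithinAt
    · exact fun t _ => (hw2' t).differentiableAt.differentiableWithinAt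
    · intro t ht
      rw [interior_Icc] at ht
      rw [(hw2' t).deriv]
      exact sub_nonneg.mpr (hG t ⟨ht.1.le, ht.2.le⟩)
  have hw2zero : w2 0 = 0 := by
    rw [hw2]; simp [hx0, hp0]
  have hA : ∀ t ∈ Set.Icc (0:ℝ) a,
      fderiv ℝ f (x + t • u) u - p0 ≤ h 0 * (Real.exp (r * t) - 1) / r := by
    intro t ht
    have := hw2mono (Set.left_mem_Icc.mpr ha) ht ht.1
    rw [hw2zero] at this
    rw [hw2] at this
    linarith
  -- second comparison
  set w : ℝ → ℝ := fun t => h 0 * (Real.exp (r * t) - r * t - 1) / r ^ 2 -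
    (f (x + t • u) - f x - t * p0) with hw
  have hw' : ∀ t, HasDerivAt w
      (h 0 * (Real.exp (r * t) - 1) / r - (fderiv ℝ f (x + t • u) u - p0)) t := by
    intro t
    have e1 : HasDerivAt (fun t : ℝ => Real.exp (r * t)) (Real.exp (r * t) * r) t := by
      simpa using ((hasDerivAt_id t).const_mul r).exp
    have e2 : HasDerivAt (fun t : ℝ => r * t) r t := by
      simpa using (hasDerivAt_id t).const_mul r
    have := ((((e1.sub e2).sub_const 1).const_mul (h 0)).div_const (r ^ 2)).sub
      (((phi_hasDerivAt f x u hf t).sub_const (f x)).sub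
        ((hasDerivAt_id t).mul_const p0))
    refine this.congr_deriv ?_
    simp only [hh]
    field_simp
  have hwmono : MonotoneOn w (Set.Icc 0 a) := by
    apply monotoneOn_of_deriv_nonneg (convex_Icc 0 a)
    · exact fun t _ => (hw' t).differentiableAt.continuousAt.continuousWithinAt
    · exact fun t _ => (hw' t).differentiableAt.differentiableWithinAt
    · intro t ht
      rw [interior_Icc] at ht
      rw [(hw' t).deriv]
      exact sub_nonneg.mpr (hA t ⟨ht.1.le, ht.2.le⟩)
  have hwzero : w 0 = 0 := by rw [hw]; simp [hx0]
  have := hwmono (Set.left_mem_Icc.mpr ha) (Set.right_mem_Icc.mpr ha) ha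
  rw [hwzero, hw] at this
  rw [h0eq] at this
  nlinarith [this]

lemma hessQ_eq {E : Type*} [NormedAddCommGroup E] [InnerProductSpace ℝ E]
    (f : E → ℝ) (x u : E) : hessQ f x u = fderiv ℝ (fderiv ℝ f) x u u := by
  rw [hessQ, iteratedFDeriv_two_apply]
  simp

/-- Descent lemma for the proximal variable-metric step with the analytic step size:
if `β²r ≤ (e^r - 1)λ²`, then `α = (1/r)ln(1 + β²r/λ²) ∈ (0,1]` and
`F(xᵏ + α d) ≤ F(xᵏ) - (β²/r)[(1 + λ²/(rβ²)) ln(1 + β²r/λ²) - 1]`. -/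
theorem prox_gradient_descent_lemma {E : Type*}
    [NormedAddCommGroup E] [InnerProductSpace ℝ E] [CompleteSpace E]
    (M : ℝ) (hM : 0 < M) (f : E → ℝ) (hf : SCLike M f)
    (g : E → EReal)
    (hg_proper_top : ∃ x, g x ≠ ⊤) (hg_proper_bot : ∀ x, g x ≠ ⊥)
    (hg_lsc : LowerSemicontinuous g)
    (hg_convex : ∀ x y : E, ∀ a b : ℝ, 0 ≤ a → 0 ≤ b → a + b = 1 →
      g (a • x + b • y) ≤ (a : EReal) * g x + (b : EReal) * g y)
    (xk : E) (hxk : g xk ≠ ⊤)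
    (D : E →L[ℝ] E) (hDsym : ∀ u v : E, ⟪D u, v⟫ = ⟪u, D v⟫)
    (hDpos : ∀ v : E, v ≠ 0 → 0 < ⟪D v, v⟫)
    (s : E)
    (hs : ∀ x : E,
      ((f xk + ⟪gradient f xk, s - xk⟫ + (1 / 2) * ⟪D (s - xk), s - xk⟫ : ℝ) : EReal)
          + g s ≤
        ((f xk + ⟪gradient f xk, x - xk⟫ + (1 / 2) * ⟪D (x - xk), x - xk⟫ : ℝ) : EReal)
          + g x)
    (d : E) (hd : d = s - xk) (hd0 : d ≠ 0)
    (lam r β α : ℝ)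
    (hlam : lam = Real.sqrt (hessQ f xk d))
    (hr : r = M * ‖d‖)
    (hβ : β = Real.sqrt ⟪D d, d⟫)
    (hcond : β ^ 2 * r ≤ (Real.exp r - 1) * lam ^ 2)
    (hα : α = (1 / r) * Real.log (1 + β ^ 2 * r / lam ^ 2)) :
    0 < α ∧ α ≤ 1 ∧
      (f (xk + α • d) : EReal) + g (xk + α • d) ≤
        ((f xk : EReal) + g xk) -
          ((β ^ 2 / r) *
            ((1 + lam ^ 2 / (r * β ^ 2)) * Real.log (1 + β ^ 2 * r / lam ^ 2) - 1) : ℝ) := by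
  obtain ⟨hf3, hconv, hsc3⟩ := hf
  have hrpos : 0 < r := by
    rw [hr]; exact mul_pos hM (norm_pos_iff.mpr hd0)
  have hr0 : r ≠ 0 := ne_of_gt hrpos
  have hBpos : 0 < ⟪D d, d⟫ := hDpos d hd0
  have hβ2 : β ^ 2 = ⟪D d, d⟫ := by rw [hβ, Real.sq_sqrt hBpos.le]
  have hβ2pos : 0 < β ^ 2 := hβ2 ▸ hBpos
  have hQnn : 0 ≤ hessQ f xk d := by
    rw [hessQ_eq]
    simpa using h_nonneg f xk d hf3 hconv 0
  have hlam2 : lam ^ 2 = hessQ f xk d := by rw [hlam, Real.sq_sqrt hQnn]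
  have hlam2pos : 0 < lam ^ 2 := by
    rcases lt_or_eq_of_le hQnn with h | h
    · rw [hlam2]; exact h
    · exfalso
      have : lam ^ 2 = 0 := by rw [hlam2, ← h]
      rw [this, mul_zero] at hcond
      exact absurd hcond (not_le.mpr (mul_pos hβ2pos hrpos))
  have hlam0 : lam ^ 2 ≠ 0 := ne_of_gt hlam2pos
  have hcpos : 0 < β ^ 2 * r / lam ^ 2 := div_pos (mul_pos hβ2pos hrpos) hlam2pos
  have h1c : (0:ℝ) < 1 + β ^ 2 * r / lam ^ 2 := by linarith
  -- α ∈ (0,1]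
  have hαpos : 0 < α := by
    rw [hα]
    exact mul_pos (by positivity) (Real.log_pos (by linarith))
  have hrα : r * α = Real.log (1 + β ^ 2 * r / lam ^ 2) := by
    rw [hα]; field_simp
  have hα1 : α ≤ 1 := by
    have hlog : Real.log (1 + β ^ 2 * r / lam ^ 2) ≤ r := by
      rw [Real.log_le_iff_le_exp h1c]
      have : β ^ 2 * r / lam ^ 2 ≤ Real.exp r - 1 := by
        rw [div_le_iff₀ hlam2pos]; linarith [hcond]
      linarith
    rw [hα]
    rw [div_mul_eq_mul_div, one_mul, div_le_one hrpos]
    exact hlog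
  have hexp : Real.exp (r * α) = 1 + β ^ 2 * r / lam ^ 2 := by
    rw [hrα, Real.exp_log h1c]
  refine ⟨hαpos, hα1, ?_⟩
  -- gradient = fderiv
  have hgrad : ∀ v : E, ⟪gradient f xk, v⟫ = fderiv ℝ f xk v := by
    intro v
    rw [gradient]
    exact InnerProductSpace.toDual_symm_apply
  set ip : ℝ := ⟪gradient f xk, d⟫ with hip
  -- g s is finite
  have hsd : s = xk + d := by rw [hd]; abel
  have hgs_ne_top : g s ≠ ⊤ := by
    intro htop
    have h1 := hs xk
    rw [htop, EReal.add_top_of_ne_bot (EReal.coe_ne_bot _)] at h1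
    exact absurd h1 (not_le.mpr (EReal.add_lt_top (EReal.coe_ne_top _) hxk))
  set Gk : ℝ := (g xk).toReal with hGkdef
  set Gs : ℝ := (g s).toReal with hGsdef
  have hGk : ((Gk : ℝ) : EReal) = g xk := EReal.coe_toReal hxk (hg_proper_bot xk)
  have hGs : ((Gs : ℝ) : EReal) = g s := EReal.coe_toReal hgs_ne_top (hg_proper_bot s)
  -- subgradient-type inequality
  have hKEYt : ∀ t : ℝ, 0 < t → t ≤ 1 →
      Gs ≤ Gk - ip - ⟪D d, d⟫ + t / 2 * ⟪D d, d⟫ := by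
    intro t ht0 ht1
    have hxt : xk + (1 - t) • d = t • xk + (1 - t) • s := by
      rw [hsd, smul_add]
      rw [show t • xk + ((1 - t) • xk + (1 - t) • d) = (t + (1 - t)) • xk + (1 - t) • d by
        rw [add_smul]; abel]
      norm_num
    have hconvg := hg_convex xk s t (1 - t) ht0.le (by linarith) (by ring)
    rw [← hxt] at hconvg
    have h1 := hs (xk + (1 - t) • d)
    have hsub1 : s - xk = d := by rw [hd]
    have hsub2 : xk + (1 - t) • d - xk = (1 - t) • d := by abel
    rw [hsub1, hsub2] at h1
    have hin1 : ⟪gradient f xk, (1 - t) • d⟫ = (1 - t) * ip := real_inner_smul_right _ _ _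
    have hin2 : ⟪D ((1 - t) • d), (1 - t) • d⟫ = (1 - t) ^ 2 * ⟪D d, d⟫ := by
      rw [map_smul, real_inner_smul_left, real_inner_smul_right]; ring
    rw [hin1, hin2] at h1
    have h2 : ((f xk + ip + 1 / 2 * ⟪D d, d⟫ : ℝ) : EReal) + (Gs : EReal) ≤
        ((f xk + (1 - t) * ip + 1 / 2 * ((1 - t) ^ 2 * ⟪D d, d⟫) : ℝ) : EReal) +
          ((t * Gk + (1 - t) * Gs : ℝ) : EReal) := by
      rw [hGs]
      refine h1.trans ?_
      refine add_le_add_right ?_ _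
      refine hconvg.trans ?_
      rw [← hGk, ← hGs]
      norm_cast
    rw [← EReal.coe_add, ← EReal.coe_add, EReal.coe_le_coe_iff] at h2
    have h4 : t * Gs ≤ t * (Gk - ip - ⟪D d, d⟫ + t / 2 * ⟪D d, d⟫) := by
      ring_nf at h2 ⊢
      linarith [h2]
    exact (mul_le_mul_iff_right₀ ht0).mp h4
  have hKEY : Gs ≤ Gk - ip - ⟪D d, d⟫ := by
    refine le_of_forall_pos_le_add fun ε hε => ?_
    have htc : 0 < min 1 (2 * ε / ⟪D d, d⟫) := by positivity
    have := hKEYt (min 1 (2 * ε / ⟪D d, d⟫)) htc (min_le_left _ _)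
    refine this.trans ?_
    have h2 : min 1 (2 * ε / ⟪D d, d⟫) / 2 * ⟪D d, d⟫ ≤ ε := by
      have := min_le_right 1 (2 * ε / ⟪D d, d⟫)
      calc min 1 (2 * ε / ⟪D d, d⟫) / 2 * ⟪D d, d⟫
          ≤ (2 * ε / ⟪D d, d⟫) / 2 * ⟪D d, d⟫ := by
            apply mul_le_mul_of_nonneg_right _ hBpos.le
            linarith
        _ = ε := by field_simp
    linarith
  -- Taylor bound for f
  have hT0 := taylor_bound M f hf3 hconv hsc3 xk d r hr hrpos α hαpos.le
  have hT : f (xk + α • d) ≤ f xk + α * ip + (β ^ 2 / r - α * lam ^ 2 / r) := by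
    have he : fderiv ℝ (fderiv ℝ f) xk d d * (Real.exp (r * α) - r * α - 1) / r ^ 2 =
        β ^ 2 / r - α * lam ^ 2 / r := by
      rw [← hessQ_eq, ← hlam2, hexp]
      have hlamne : lam ≠ 0 := by rintro rfl; simp at hlam0
      field_simp
      ring
    rw [he] at hT0
    have h5 : α * ip = α * fderiv ℝ f xk d := by rw [hip, hgrad d]
    linarith [hT0, h5.le, h5.ge]
  -- convexity of g at x⁺
  have hxplus : xk + α • d = (1 - α) • xk + α • s := by
    rw [hsd, smul_add]
    rw [show (1 - α) • xk + (α • xk + α • d) = ((1 - α) + α) • xk + α • d by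
      rw [add_smul]; abel]
    norm_num
  have hgplus : g (xk + α • d) ≤ (((1 - α) * Gk + α * Gs : ℝ) : EReal) := by
    rw [hxplus]
    refine (hg_convex xk s (1 - α) α (by linarith) hαpos.le (by ring)).trans ?_
    rw [← hGk, ← hGs]
    norm_cast
  -- final assembly
  set c : ℝ := (β ^ 2 / r) *
      ((1 + lam ^ 2 / (r * β ^ 2)) * Real.log (1 + β ^ 2 * r / lam ^ 2) - 1) with hc
  have hceq : c = α * β ^ 2 + α * lam ^ 2 / r - β ^ 2 / r := by
    rw [hc, ← hrα]
    have hβne : β ≠ 0 := by rintro rfl; simp at hβ2pos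
    field_simp
  have hreal : f (xk + α • d) + ((1 - α) * Gk + α * Gs) ≤ f xk + Gk - c := by
    have h3 : α * Gs ≤ α * Gk - α * ip - α * β ^ 2 := by
      have h := mul_le_mul_of_nonneg_left hKEY hαpos.le
      rw [mul_sub, mul_sub, ← hβ2] at h
      exact h
    rw [hceq]
    ring_nf at hT h3 ⊢
    linarith [hT, h3]
  calc (f (xk + α • d) : EReal) + g (xk + α • d)
      ≤ ((f (xk + α • d) : ℝ) : EReal) + (((1 - α) * Gk + α * Gs : ℝ) : EReal) :=
        add_le_add_right hgplus _
    _ = ((f (xk + α • d) + ((1 - α) * Gk + α * Gs) : ℝ) : EReal) := by norm_cast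
    _ ≤ ((f xk + Gk - c : ℝ) : EReal) := EReal.coe_le_coe_iff.mpr hreal
    _ = ((f xk : EReal) + g xk) - (c : EReal) := by
        rw [← hGk]
        norm_cast
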